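/- Let X be a separable r.i. space on (0,∞), a ∈ X with a ≠ 0 and supp a ⊂ [0,1), and define translations τ_n a(t) := a(t − n + 1)·χ_{[n−1,n)}(t). If some subsequence {τ_{n_k} a} spans a complemented subspace of X, then the full sequence {τ_n a} spans a complemented subspace of X. -/
import Mathlib


open MeasureTheory Set Filter Topology

noncomputable section

/-- A Banach function lattice on a subset `I ⊆ ℝ` (with Lebesgue measure), encoded by
a membership predicate `Mem` and a (total) norm function `N` satisfying the lattice/ideal
axioms on members. -/
structure BFL (I : Set ℝ) where
  Mem : (ℝ → ℝ) → Prop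
  N : (ℝ → ℝ) → ℝ
  mem_meas : ∀ f, Mem f → AEMeasurable f (volume.restrict I)
  nonneg : ∀ f, 0 ≤ N f
  zero_mem : Mem 0
  zero_norm : N 0 = 0
  ideal : ∀ f g, AEMeasurable f (volume.restrict I) →
    (∀ᵐ t ∂volume.restrict I, |f t| ≤ |g t|) → Mem g → Mem f ∧ N f ≤ N g
  add_mem : ∀ f g, Mem f → Mem g → Mem (f + g)
  add_le : ∀ f g, Mem f → Mem g → N (f + g) ≤ N f + N g
  smul_mem : ∀ (c : ℝ) f, Mem f → Mem (c • f)
  smul_norm : ∀ (c : ℝ) f, Mem f → N (c • f) = |c| * N f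

/-- A rearrangement invariant (symmetric) space on `I`: a Banach function lattice whose
norm depends only on the distribution function, having the Fatou property (the paper's
standing assumption that r.i. spaces are separable or maximal). -/
structure RIS (I : Set ℝ) extends BFL I where
  symm : ∀ f g, AEMeasurable f (volume.restrict I) → Mem g →
    (∀ τ : ℝ, 0 < τ →
      (volume.restrict I) {t | τ < |f t|} = (volume.restrict I) {t | τ < |g t|}) →
    Mem f ∧ N f = N g
  fatou : ∀ (f : ℕ → ℝ → ℝ) (g : ℝ → ℝ) (C : ℝ), (∀ n, Mem (f n)) →
    (∀ n, ∀ᵐ t ∂volume.restrict I, 0 ≤ f n t ∧ f n t ≤ f (n + 1) t) →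
    (∀ᵐ t ∂volume.restrict I, Tendsto (fun n => f n t) atTop (𝓝 (g t))) →
    AEMeasurable g (volume.restrict I) → (∀ n, N (f n) ≤ C) →
    Mem g ∧ N g ≤ C

/-- The fundamental function `φ_X(t) = ‖χ_{[0,t]}‖_X` of an r.i. space on `[0,1]`. -/
def fund (X : RIS (Set.Icc (0:ℝ) 1)) (t : ℝ) : ℝ :=
  X.N ((Set.Icc (0:ℝ) t).indicator fun _ => (1:ℝ))

/-- The sequence `{v_k}` of (disjointly supported) functions spans a complemented subspace
of `X`: there exist biorthogonal functionals `b_k` such that the associated projection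
`x ↦ Σ_k ⟨x, b_k⟩ v_k` is bounded on `X`. -/
def ComplSeq {I : Set ℝ} (X : RIS I) (v : ℕ → ℝ → ℝ) : Prop :=
  ∃ (b : ℕ → ℝ → ℝ) (C : ℝ), 0 < C ∧
    (∀ j k, (∫ t in I, b k t * v j t) = if j = k then (1:ℝ) else 0) ∧
    ∀ x, X.Mem x →
      X.Mem (fun t => ∑' k, (∫ s in I, b k s * x s) * v k t) ∧
      X.N (fun t => ∑' k, (∫ s in I, b k s * x s) * v k t) ≤ C * X.N x

/-- The translation `τ_n a (t) = a(t − n)·χ_{[n, n+1)}(t)` (`0`-indexed version of the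
paper's `τ_{n+1}`). -/
def transl (a : ℝ → ℝ) (n : ℕ) : ℝ → ℝ :=
  fun t => if t ∈ Set.Ico (n : ℝ) (n + 1) then a (t - n) else 0


namespace Stmt14Aux

/-- piecewise translation sending `[j, j+1)` to `[n j, n j + 1)` -/
def Tmap (n : ℕ → ℕ) (t : ℝ) : ℝ := t - (⌊t⌋₊ : ℝ) + (n ⌊t⌋₊ : ℝ)

/-- index of the block `[n j, n j + 1)` containing `s` (if any) -/
def mIdx (n : ℕ → ℕ) (s : ℝ) : ℕ := sInf {j | s < (n j : ℝ) + 1}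

/-- piecewise translation sending `[n j, n j + 1)` back to `[j, j+1)` -/
def Smap (n : ℕ → ℕ) (s : ℝ) : ℝ := s - (n (mIdx n s) : ℝ) + (mIdx n s : ℝ)

def U (n : ℕ → ℕ) : Set ℝ := ⋃ j, Set.Ico ((n j : ℝ)) ((n j : ℝ) + 1)

variable {n : ℕ → ℕ}

lemma mIdx_eq (hn : StrictMono n) {j : ℕ} {s : ℝ}
    (h : s ∈ Set.Ico ((n j : ℝ)) ((n j : ℝ) + 1)) : mIdx n s = j := by
  have hjmem : j ∈ {j | s < (n j : ℝ) + 1} := h.2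
  have h1 : mIdx n s ≤ j := Nat.sInf_le hjmem
  have h2 : mIdx n s ∈ {j | s < (n j : ℝ) + 1} := Nat.sInf_mem ⟨j, hjmem⟩
  by_contra hne
  have hlt : mIdx n s < j := lt_of_le_of_ne h1 hne
  have : n (mIdx n s) + 1 ≤ n j := Nat.succ_le_of_lt (hn hlt)
  have : ((n (mIdx n s) : ℝ) + 1) ≤ (n j : ℝ) := by exact_mod_cast this
  exact absurd h2 (not_lt.2 (le_trans this h.1))

lemma Tmap_eq_on {j : ℕ} {t : ℝ} (h : t ∈ Set.Ico ((j : ℝ)) ((j : ℝ) + 1)) :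
    Tmap n t = t + ((n j : ℝ) - (j : ℝ)) := by
  have : ⌊t⌋₊ = j := Nat.floor_eq_on_Ico j t (by exact_mod_cast h)
  simp [Tmap, this]; ring

lemma Tmap_mem (t : ℝ) (ht : 0 ≤ t) :
    Tmap n t ∈ Set.Ico ((n ⌊t⌋₊ : ℝ)) ((n ⌊t⌋₊ : ℝ) + 1) := by
  constructor
  · simp [Tmap]; exact Nat.floor_le ht
  · simp [Tmap]
    have := Nat.lt_floor_add_one t
    linarith

lemma Smap_Tmap (hn : StrictMono n) (t : ℝ) (ht : 0 ≤ t) : Smap n (Tmap n t) = t := by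
  have h1 := Tmap_mem (n := n) t ht
  have h2 : mIdx n (Tmap n t) = ⌊t⌋₊ := mIdx_eq hn h1
  unfold Smap
  rw [h2]
  unfold Tmap
  ring

lemma Tmap_Smap (hn : StrictMono n) {s : ℝ} {j : ℕ}
    (hs : s ∈ Set.Ico ((n j : ℝ)) ((n j : ℝ) + 1)) : Tmap n (Smap n s) = s := by
  have hj : mIdx n s = j := mIdx_eq hn hs
  have hmem : Smap n s ∈ Set.Ico ((j:ℝ)) ((j:ℝ)+1) := by
    simp only [Smap, hj, Set.mem_Ico]
    exact ⟨by linarith [hs.1], by linarith [hs.2]⟩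
  rw [Tmap_eq_on hmem]
  simp only [Smap, hj]
  ring

lemma measurable_coe_comp {α : Type*} [MeasurableSpace α] (f : ℕ → α) (g : ℝ → ℕ)
    (hg : Measurable g) : Measurable (fun t => f (g t)) :=
  (measurable_from_top (f := f)).comp hg

lemma mIdx_set_nonempty (hn : StrictMono n) (s : ℝ) : {j | s < (n j : ℝ) + 1}.Nonempty := by
  obtain ⟨k, hk⟩ := exists_nat_gt s
  refine ⟨k, ?_⟩
  have : (k : ℝ) ≤ (n k : ℝ) := by exact_mod_cast hn.le_apply
  show s < (n k : ℝ) + 1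
  linarith

lemma measurable_mIdx (hn : StrictMono n) : Measurable (mIdx n) := by
  have hmono : Monotone (mIdx n) := by
    intro s s' hss
    exact Nat.sInf_le (show mIdx n s' ∈ {j | s < (n j : ℝ) + 1} from
      lt_of_le_of_lt hss (Nat.sInf_mem (mIdx_set_nonempty hn s')))
  exact hmono.measurable

end Stmt14Aux

namespace Stmt14Aux

lemma measurable_castcomp (f : ℕ → ℝ) (g : ℝ → ℕ) (hg : Measurable g) :
    Measurable (fun t => f (g t)) := (measurable_from_top (f := f)).comp hg

lemma measurable_Tmap : Measurable (Tmap n) := by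
  unfold Tmap
  exact (measurable_id.sub (measurable_castcomp _ _ Nat.measurable_floor)).add
    (measurable_castcomp (fun k => ((n k : ℕ) : ℝ)) _ Nat.measurable_floor)

lemma measurable_Smap (hn : StrictMono n) : Measurable (Smap n) := by
  unfold Smap
  exact (measurable_id.sub (measurable_castcomp (fun k => ((n k : ℕ) : ℝ)) _
    (measurable_mIdx hn))).add (measurable_castcomp _ _ (measurable_mIdx hn))

lemma measurableSet_U : MeasurableSet (U n) :=
  MeasurableSet.iUnion fun _ => measurableSet_Ico

lemma null_shift (c : ℝ) (D : Set ℝ) (hD : volume D = 0) :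
    volume ((fun t => t - c) ⁻¹' D) = 0 := by
  have h := measure_preimage_add_right (volume : Measure ℝ) (-c) D
  rw [hD] at h
  rw [← h]
  simp [sub_eq_add_neg]

lemma Ici_eq_iUnion : Set.Ici (0:ℝ) = ⋃ j : ℕ, Set.Ico ((j:ℝ)) ((j:ℝ)+1) := by
  ext t
  simp only [Set.mem_Ici, Set.mem_iUnion, Set.mem_Ico]
  constructor
  · intro ht
    exact ⟨⌊t⌋₊, Nat.floor_le ht, Nat.lt_floor_add_one t⟩
  · rintro ⟨j, hj, -⟩
    exact le_trans (by positivity) hj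

lemma disjoint_Ico_nat {f : ℕ → ℕ} (hf : StrictMono f) :
    Pairwise (Function.onFun Disjoint (fun j => Set.Ico ((f j : ℝ)) ((f j : ℝ)+1))) := by
  intro i j hij
  wlog h : i < j generalizing i j
  · exact (this hij.symm (hij.lt_or_gt.resolve_left h)).symm
  have h1 : (f i : ℝ) + 1 ≤ (f j : ℝ) := by exact_mod_cast Nat.succ_le_of_lt (hf h)
  apply Set.disjoint_left.2
  rintro t ⟨-, h2⟩ ⟨h3, -⟩
  linarith

/-- the key measure-transport: `Tmap` pushes Lebesgue on `[0,∞)` to Lebesgue on `U`. -/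
lemma map_Tmap (hn : StrictMono n) :
    Measure.map (Tmap n) (volume.restrict (Set.Ici (0:ℝ))) = volume.restrict (U n) := by
  have h1 : volume.restrict (Set.Ici (0:ℝ))
      = Measure.sum (fun j : ℕ => volume.restrict (Set.Ico ((j:ℝ)) ((j:ℝ)+1))) := by
    rw [Ici_eq_iUnion]
    exact Measure.restrict_iUnion (disjoint_Ico_nat strictMono_id)
      (fun _ => measurableSet_Ico)
  have h2 : volume.restrict (U n)
      = Measure.sum (fun j : ℕ => volume.restrict (Set.Ico ((n j:ℝ)) ((n j:ℝ)+1))) :=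
    Measure.restrict_iUnion (disjoint_Ico_nat hn) (fun _ => measurableSet_Ico)
  rw [h1, h2, Measure.map_sum measurable_Tmap.aemeasurable]
  congr 1
  funext j
  have e1 : Measure.map (Tmap n) (volume.restrict (Set.Ico ((j:ℝ)) ((j:ℝ)+1)))
      = Measure.map (fun t => t + ((n j : ℝ) - (j:ℝ)))
          (volume.restrict (Set.Ico ((j:ℝ)) ((j:ℝ)+1))) := by
    apply Measure.map_congr
    refine Filter.eventuallyEq_of_mem (self_mem_ae_restrict measurableSet_Ico) ?_
    intro t ht
    exact Tmap_eq_on ht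
  rw [e1]
  have e2 : Set.Ico ((j:ℝ)) ((j:ℝ)+1)
      = (fun t => t + ((n j : ℝ) - (j:ℝ))) ⁻¹' (Set.Ico ((n j:ℝ)) ((n j:ℝ)+1)) := by
    ext t
    simp only [Set.mem_Ico, Set.mem_preimage]
    constructor <;> rintro ⟨u, v⟩ <;> constructor <;> linarith
  rw [e2, ← Measure.restrict_map (measurable_add_const _) measurableSet_Ico,
    map_add_right_eq_self]

lemma map_Smap (hn : StrictMono n) :
    Measure.map (Smap n) (volume.restrict (U n)) = volume.restrict (Set.Ici (0:ℝ)) := by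
  have h1 : volume.restrict (Set.Ici (0:ℝ))
      = Measure.sum (fun j : ℕ => volume.restrict (Set.Ico ((j:ℝ)) ((j:ℝ)+1))) := by
    rw [Ici_eq_iUnion]
    exact Measure.restrict_iUnion (disjoint_Ico_nat strictMono_id)
      (fun _ => measurableSet_Ico)
  have h2 : volume.restrict (U n)
      = Measure.sum (fun j : ℕ => volume.restrict (Set.Ico ((n j:ℝ)) ((n j:ℝ)+1))) :=
    Measure.restrict_iUnion (disjoint_Ico_nat hn) (fun _ => measurableSet_Ico)
  rw [h1, h2, Measure.map_sum (measurable_Smap hn).aemeasurable]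
  congr 1
  funext j
  have e1 : Measure.map (Smap n) (volume.restrict (Set.Ico ((n j:ℝ)) ((n j:ℝ)+1)))
      = Measure.map (fun t => t + ((j : ℝ) - (n j:ℝ)))
          (volume.restrict (Set.Ico ((n j:ℝ)) ((n j:ℝ)+1))) := by
    apply Measure.map_congr
    refine Filter.eventuallyEq_of_mem (self_mem_ae_restrict measurableSet_Ico) ?_
    intro t ht
    have := mIdx_eq hn ht
    unfold Smap
    rw [this]
    ring
  rw [e1]
  have e2 : Set.Ico ((n j:ℝ)) ((n j:ℝ)+1)
      = (fun t => t + ((j : ℝ) - (n j:ℝ))) ⁻¹' (Set.Ico ((j:ℝ)) ((j:ℝ)+1)) := by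
    ext t
    simp only [Set.mem_Ico, Set.mem_preimage]
    constructor <;> rintro ⟨u, v⟩ <;> constructor <;> linarith
  rw [e2, ← Measure.restrict_map (measurable_add_const _) measurableSet_Ico,
    map_add_right_eq_self]

end Stmt14Aux

namespace Stmt14Aux

lemma integral_shift (g : ℝ → ℝ) (c : ℝ) (hc : 0 ≤ c) (hg : ∀ t, t < c → g t = 0) :
    ∫ t in Set.Ici (0:ℝ), g (t + c) = ∫ t in Set.Ici (0:ℝ), g t := by
  rw [← integral_indicator measurableSet_Ici, ← integral_indicator measurableSet_Ici]
  have h1 : (Set.Ici (0:ℝ)).indicator (fun t => g (t + c))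
      = fun t => (Set.Ici (0:ℝ)).indicator g (t + c) := by
    funext t
    by_cases ht : (0:ℝ) ≤ t
    · rw [Set.indicator_of_mem (Set.mem_Ici.2 ht),
        Set.indicator_of_mem (Set.mem_Ici.2 (by linarith))]
    · rw [Set.indicator_of_notMem (fun h => ht (Set.mem_Ici.1 h))]
      by_cases h2 : (0:ℝ) ≤ t + c
      · rw [Set.indicator_of_mem (Set.mem_Ici.2 h2)]
        exact (hg _ (by linarith)).symm
      · rw [Set.indicator_of_notMem (fun h => h2 (Set.mem_Ici.1 h))]
  rw [h1]
  exact integral_add_right_eq_self ((Set.Ici (0:ℝ)).indicator g) c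

lemma U_subset : U n ⊆ Set.Ici (0:ℝ) := by
  rintro s hs
  simp only [U, Set.mem_iUnion, Set.mem_Ico] at hs
  obtain ⟨j, h1, -⟩ := hs
  exact Set.mem_Ici.2 (le_trans (by positivity) h1)

/-- set integral over `Ici 0` equals set integral over `U` when the integrand vanishes
on `Ici 0 \ U`. -/
lemma setIntegral_Ici_eq_U (h : ℝ → ℝ) (hv : ∀ s ∈ Set.Ici (0:ℝ), s ∉ U n → h s = 0) :
    ∫ s in Set.Ici (0:ℝ), h s = ∫ s in U n, h s := by
  rw [← integral_indicator measurableSet_Ici, ← integral_indicator (measurableSet_U (n := n))]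
  congr 1
  funext s
  by_cases hU : s ∈ U n
  · rw [Set.indicator_of_mem hU, Set.indicator_of_mem (U_subset hU)]
  · rw [Set.indicator_of_notMem hU]
    by_cases hI : s ∈ Set.Ici (0:ℝ)
    · rw [Set.indicator_of_mem hI]
      exact hv s hI hU
    · rw [Set.indicator_of_notMem hI]

/-- change of variables along `Tmap` for an arbitrary integrand. -/
lemma integral_comp_Tmap (hn : StrictMono n) (h : ℝ → ℝ) :
    ∫ t in Set.Ici (0:ℝ), h (Tmap n t) = ∫ s in U n, h s := by
  by_cases hm : AEStronglyMeasurable h (volume.restrict (U n))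
  · rw [← map_Tmap hn] at hm ⊢
    exact (integral_map measurable_Tmap.aemeasurable hm).symm
  · rw [integral_non_aestronglyMeasurable hm]
    apply integral_non_aestronglyMeasurable
    intro hcomp
    apply hm
    have h2 : AEStronglyMeasurable (fun t => h (Tmap n t))
        (Measure.map (Smap n) (volume.restrict (U n))) := by
      rw [map_Smap hn]; exact hcomp
    have h3 : AEStronglyMeasurable ((fun t => h (Tmap n t)) ∘ (Smap n))
        (volume.restrict (U n)) := h2.comp_measurable (measurable_Smap hn)
    apply h3.congr
    refine Filter.eventuallyEq_of_mem (self_mem_ae_restrict (measurableSet_U (n := n))) ?_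
    intro s hs
    simp only [U, Set.mem_iUnion] at hs
    obtain ⟨j, hj⟩ := hs
    show h (Tmap n (Smap n s)) = h s
    rw [Tmap_Smap hn hj]

end Stmt14Aux

namespace Stmt14Aux

/-- If two functions agree off a set that is null in `[0,∞)`, their distribution sets have
equal measure. -/
lemma dist_congr (f f' : ℝ → ℝ) (h : volume ({t | f t ≠ f' t} ∩ Set.Ici (0:ℝ)) = 0) (τ : ℝ) :
    (volume.restrict (Set.Ici (0:ℝ))) {t | τ < |f t|}
      = (volume.restrict (Set.Ici (0:ℝ))) {t | τ < |f' t|} := by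
  rw [Measure.restrict_apply' measurableSet_Ici, Measure.restrict_apply' measurableSet_Ici]
  apply le_antisymm
  · calc volume ({t | τ < |f t|} ∩ Set.Ici 0)
        ≤ volume (({t | τ < |f' t|} ∩ Set.Ici 0) ∪ ({t | f t ≠ f' t} ∩ Set.Ici (0:ℝ))) := by
          apply measure_mono
          rintro t ⟨ht, ht0⟩
          by_cases he : f t = f' t
          · exact Or.inl ⟨by rw [Set.mem_setOf_eq, ← he]; exact ht, ht0⟩
          · exact Or.inr ⟨he, ht0⟩
      _ ≤ _ + _ := measure_union_le _ _
      _ = volume ({t | τ < |f' t|} ∩ Set.Ici 0) := by rw [h, add_zero]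
  · calc volume ({t | τ < |f' t|} ∩ Set.Ici 0)
        ≤ volume (({t | τ < |f t|} ∩ Set.Ici 0) ∪ ({t | f t ≠ f' t} ∩ Set.Ici (0:ℝ))) := by
          apply measure_mono
          rintro t ⟨ht, ht0⟩
          by_cases he : f t = f' t
          · exact Or.inl ⟨by rw [Set.mem_setOf_eq, he]; exact ht, ht0⟩
          · exact Or.inr ⟨he, ht0⟩
      _ ≤ _ + _ := measure_union_le _ _
      _ = volume ({t | τ < |f t|} ∩ Set.Ici 0) := by rw [h, add_zero]

/-- Transport of the distribution function along `Tmap`. -/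
lemma dist_Tmap {n : ℕ → ℕ} (hn : StrictMono n) (F G : ℝ → ℝ) (hG : Measurable G)
    (hFG : ∀ t, 0 ≤ t → F t = G (Tmap n t))
    (hGvan : ∀ s, 0 ≤ s → s ∉ U n → G s = 0) (τ : ℝ) (hτ : 0 < τ) :
    (volume.restrict (Set.Ici (0:ℝ))) {t | τ < |F t|}
      = (volume.restrict (Set.Ici (0:ℝ))) {s | τ < |G s|} := by
  have hset : MeasurableSet {s | τ < |G s|} :=
    measurableSet_lt measurable_const hG.abs
  have h1 : {t | τ < |F t|} ∩ Set.Ici (0:ℝ)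
      = (Tmap n ⁻¹' {s | τ < |G s|}) ∩ Set.Ici (0:ℝ) := by
    ext t
    simp only [Set.mem_inter_iff, Set.mem_setOf_eq, Set.mem_preimage, Set.mem_Ici]
    constructor
    · rintro ⟨h, h0⟩; exact ⟨by rwa [← hFG t h0], h0⟩
    · rintro ⟨h, h0⟩; exact ⟨by rwa [hFG t h0], h0⟩
  rw [Measure.restrict_apply' measurableSet_Ici, h1,
    ← Measure.restrict_apply' measurableSet_Ici,
    ← Measure.map_apply measurable_Tmap hset, map_Tmap hn,
    Measure.restrict_apply' (measurableSet_U (n := n)),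
    Measure.restrict_apply' measurableSet_Ici]
  congr 1
  ext s
  simp only [Set.mem_inter_iff, Set.mem_setOf_eq, Set.mem_Ici]
  constructor
  · rintro ⟨h, hU⟩; exact ⟨h, U_subset hU⟩
  · rintro ⟨h, h0⟩
    refine ⟨h, ?_⟩
    by_contra hU
    rw [hGvan s h0 hU] at h
    simp at h
    linarith

/-- measurable version of `t ↦ transl g (f t) t`. -/
def trG (g : ℝ → ℝ) (f : ℝ → ℕ) : ℝ → ℝ :=
  fun t => if (f t : ℝ) ≤ t ∧ t < (f t : ℝ) + 1 then g (t - (f t : ℝ)) else 0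

lemma trG_eq (g : ℝ → ℝ) (f : ℝ → ℕ) (t : ℝ) : trG g f t = transl g (f t) t := by
  simp only [trG, transl, Set.mem_Ico]

lemma measurable_trG {g : ℝ → ℝ} (hg : Measurable g) {f : ℝ → ℕ} (hf : Measurable f) :
    Measurable (trG g f) := by
  apply Measurable.ite
  · exact (measurableSet_le (measurable_castcomp _ _ hf) measurable_id).inter
      (measurableSet_lt measurable_id ((measurable_castcomp (fun k => (k:ℝ)+1) _ hf)))
  · exact hg.comp (measurable_id.sub (measurable_castcomp _ _ hf))
  · exact measurable_const

/-- bad set for replacing `a` by its measurable version inside `transl`. -/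
lemma transl_ae_congr (a ga : ℝ → ℝ)
    (h : volume ({t | a t ≠ ga t} ∩ Set.Ici (0:ℝ)) = 0) (f : ℝ → ℕ) :
    volume ({t | transl a (f t) t ≠ transl ga (f t) t} ∩ Set.Ici (0:ℝ)) = 0 := by
  set D := toMeasurable volume ({t | a t ≠ ga t} ∩ Set.Ici (0:ℝ)) with hD
  have hDnull : volume D = 0 := by rw [hD, measure_toMeasurable]; exact h
  have hsub : {t | transl a (f t) t ≠ transl ga (f t) t} ∩ Set.Ici (0:ℝ)
      ⊆ ⋃ j : ℕ, (fun t => t - (j:ℝ)) ⁻¹' D := by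
    rintro t ⟨ht, -⟩
    simp only [Set.mem_setOf_eq, transl] at ht
    by_cases hmem : t ∈ Set.Ico ((f t : ℝ)) ((f t : ℝ) + 1)
    · rw [if_pos hmem, if_pos hmem] at ht
      have h0 : (0:ℝ) ≤ t - (f t : ℝ) := by linarith [hmem.1]
      refine Set.mem_iUnion.2 ⟨f t, ?_⟩
      exact subset_toMeasurable _ _ ⟨fun he => ht (by rw [he]), Set.mem_Ici.2 h0⟩
    · rw [if_neg hmem, if_neg hmem] at ht
      exact absurd rfl ht
  exact measure_mono_null hsub (measure_iUnion_null fun j => null_shift _ _ hDnull)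

end Stmt14Aux

namespace Stmt14Aux

lemma tsum_transl_floor (a : ℝ → ℝ) (c : ℕ → ℝ) (t : ℝ) :
    ∑' k, c k * transl a k t = c ⌊t⌋₊ * transl a ⌊t⌋₊ t := by
  apply tsum_eq_single
  intro k hk
  by_cases hmem : t ∈ Set.Ico ((k : ℝ)) ((k : ℝ) + 1)
  · exact absurd (Nat.floor_eq_on_Ico k t hmem).symm hk
  · rw [show transl a k t = 0 from if_neg hmem, mul_zero]

lemma tsum_transl_sub {n : ℕ → ℕ} (hn : StrictMono n) (a : ℝ → ℝ) (d : ℕ → ℝ) (t : ℝ) :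
    ∑' k, d k * transl a (n k) t = d (mIdx n t) * transl a (n (mIdx n t)) t := by
  apply tsum_eq_single
  intro k hk
  by_cases hmem : t ∈ Set.Ico ((n k : ℝ)) ((n k : ℝ) + 1)
  · exact absurd (mIdx_eq hn hmem).symm hk
  · rw [show transl a (n k) t = 0 from if_neg hmem, mul_zero]

lemma biorth_transfer {n : ℕ → ℕ} (hn : StrictMono n) (a bk : ℝ → ℝ) (j : ℕ) :
    ∫ t in Set.Ici (0:ℝ), bk (Tmap n t) * transl a j t
      = ∫ t in Set.Ici (0:ℝ), bk t * transl a (n j) t := by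
  have hc : (0:ℝ) ≤ (n j : ℝ) - (j : ℝ) := by
    have : (j : ℝ) ≤ (n j : ℝ) := by exact_mod_cast hn.le_apply
    linarith
  have hpt : ∀ t, bk (Tmap n t) * transl a j t
      = (fun s => bk s * transl a (n j) s) (t + ((n j : ℝ) - (j : ℝ))) := by
    intro t
    by_cases hmem : t ∈ Set.Ico ((j : ℝ)) ((j : ℝ) + 1)
    · have hT := Tmap_eq_on (n := n) hmem
      have hmem' : t + ((n j : ℝ) - (j : ℝ)) ∈ Set.Ico ((n j : ℝ)) ((n j : ℝ) + 1) :=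
        ⟨by linarith [hmem.1], by linarith [hmem.2]⟩
      simp only [transl, if_pos hmem, if_pos hmem', hT]
      ring_nf
    · have hmem' : t + ((n j : ℝ) - (j : ℝ)) ∉ Set.Ico ((n j : ℝ)) ((n j : ℝ) + 1) := by
        intro hc'
        exact hmem ⟨by linarith [hc'.1], by linarith [hc'.2]⟩
      simp only [transl, if_neg hmem, if_neg hmem', mul_zero]
  rw [integral_congr_ae (ae_of_all _ hpt)]
  exact integral_shift (fun s => bk s * transl a (n j) s) _ hc (fun t ht => by
    have hne : t ∉ Set.Ico ((n j : ℝ)) ((n j : ℝ) + 1) := fun hc' => by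
      have h1 : ((n j : ℝ)) ≤ t := hc'.1
      linarith
    simp only [show transl a (n j) t = 0 from if_neg hne, mul_zero])

end Stmt14Aux

/-- Let `X` be a separable r.i. space on `(0,∞)`, `a ∈ X`, `a ≠ 0`,
`supp a ⊆ [0,1)`. If some subsequence `{τ_{n_k} a}` of the sequence of translations spans
a complemented subspace of `X`, then the whole sequence `{τ_n a}` spans a complemented
subspace of `X`. -/
theorem stmt14 (X : RIS (Set.Ici (0:ℝ)))
    -- separability (order continuity of the norm):
    (hsep : ∀ f, X.Mem f → ∀ B : ℕ → Set ℝ, (∀ n, MeasurableSet (B n)) → Antitone B →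
      volume (Set.Ici (0:ℝ) ∩ ⋂ n, B n) = 0 →
      Tendsto (fun n => X.N fun t => (B n).indicator f t) atTop (𝓝 0))
    (a : ℝ → ℝ) (ha : X.Mem a)
    (hane : ¬ a =ᵐ[volume.restrict (Set.Ici (0:ℝ))] 0)
    (hsupp : ∀ t, t ∉ Set.Ico (0:ℝ) 1 → a t = 0)
    (n : ℕ → ℕ) (hn : StrictMono n)
    (hcompl : ComplSeq X (fun k => transl a (n k))) :
    ComplSeq X (transl a) := by
  classical
  obtain ⟨b, C, hC, hbi, hP⟩ := hcompl
  -- measurable version of `a`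
  have haM : AEMeasurable a (volume.restrict (Set.Ici (0:ℝ))) := X.mem_meas a ha
  obtain ⟨ga, hgaM, haga⟩ : ∃ ga, Measurable ga ∧ a =ᵐ[volume.restrict (Set.Ici (0:ℝ))] ga :=
    ⟨haM.mk a, haM.measurable_mk, haM.ae_eq_mk⟩
  have hanull : volume ({t | a t ≠ ga t} ∩ Set.Ici (0:ℝ)) = 0 := by
    have h := ae_iff.mp haga
    rwa [Measure.restrict_apply' measurableSet_Ici] at h
  refine ⟨fun k => fun t => b k (Stmt14Aux.Tmap n t), C, hC, ?_, ?_⟩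
  · -- biorthogonality
    intro j k
    show (∫ t in Set.Ici (0:ℝ), b k (Stmt14Aux.Tmap n t) * transl a j t)
      = if j = k then (1:ℝ) else 0
    rw [Stmt14Aux.biorth_transfer hn a (b k) j]
    exact hbi j k
  · -- the projection bound
    intro x hx
    have hxM : AEMeasurable x (volume.restrict (Set.Ici (0:ℝ))) := X.mem_meas x hx
    obtain ⟨gx, hgxM, hxgx⟩ : ∃ gx, Measurable gx ∧
        x =ᵐ[volume.restrict (Set.Ici (0:ℝ))] gx :=
      ⟨hxM.mk x, hxM.measurable_mk, hxM.ae_eq_mk⟩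
    have hxnull : volume ({t | x t ≠ gx t} ∩ Set.Ici (0:ℝ)) = 0 := by
      have h := ae_iff.mp hxgx
      rwa [Measure.restrict_apply' measurableSet_Ici] at h
    -- the rearranged copy of `x` living on `U n`
    set Rg : ℝ → ℝ := fun s =>
      if ((n (Stmt14Aux.mIdx n s) : ℝ) ≤ s ∧ s < (n (Stmt14Aux.mIdx n s) : ℝ) + 1)
        then gx (Stmt14Aux.Smap n s) else 0 with hRg_def
    have hRgM : Measurable Rg := by
      apply Measurable.ite
      · rw [Set.setOf_and]
        exact (measurableSet_le
            (Stmt14Aux.measurable_castcomp (fun k => ((n k : ℕ) : ℝ)) _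
              (Stmt14Aux.measurable_mIdx hn)) measurable_id).inter
          (measurableSet_lt measurable_id
            (Stmt14Aux.measurable_castcomp (fun k => ((n k : ℕ) : ℝ) + 1) _
              (Stmt14Aux.measurable_mIdx hn)))
      · exact hgxM.comp (Stmt14Aux.measurable_Smap hn)
      · exact measurable_const
    have hRg_T : ∀ t, 0 ≤ t → gx t = Rg (Stmt14Aux.Tmap n t) := by
      intro t ht
      have h1 := Stmt14Aux.Tmap_mem (n := n) t ht
      have h2 : Stmt14Aux.mIdx n (Stmt14Aux.Tmap n t) = ⌊t⌋₊ := Stmt14Aux.mIdx_eq hn h1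
      rw [hRg_def]
      simp only [h2]
      rw [if_pos ⟨h1.1, h1.2⟩, Stmt14Aux.Smap_Tmap hn t ht]
    have hRg_van : ∀ s, s ∉ Stmt14Aux.U n → Rg s = 0 := by
      intro s hs
      rw [hRg_def]
      apply if_neg
      intro hc
      exact hs (Set.mem_iUnion.2 ⟨Stmt14Aux.mIdx n s, ⟨hc.1, hc.2⟩⟩)
    -- Rg is equimeasurable with x
    have hdistR : ∀ τ : ℝ, 0 < τ →
        (volume.restrict (Set.Ici (0:ℝ))) {t | τ < |Rg t|}
          = (volume.restrict (Set.Ici (0:ℝ))) {t | τ < |x t|} := by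
      intro τ hτ
      have e1 := Stmt14Aux.dist_congr x gx hxnull τ
      have e2 := Stmt14Aux.dist_Tmap hn gx Rg hRgM hRg_T (fun s _ hU => hRg_van s hU) τ hτ
      rw [e1, e2]
    have hmemR : X.Mem Rg ∧ X.N Rg = X.N x := X.symm Rg x hRgM.aemeasurable hx hdistR
    -- coefficients agree
    have hcd : ∀ k, (∫ s in Set.Ici (0:ℝ), b k (Stmt14Aux.Tmap n s) * x s)
        = ∫ s in Set.Ici (0:ℝ), b k s * Rg s := by
      intro k
      have e1 : (∫ s in Set.Ici (0:ℝ), b k (Stmt14Aux.Tmap n s) * x s)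
          = ∫ s in Set.Ici (0:ℝ), b k (Stmt14Aux.Tmap n s) * gx s :=
        integral_congr_ae (hxgx.mono fun t h => by simp only [h])
      have e2 : (∫ s in Set.Ici (0:ℝ), b k (Stmt14Aux.Tmap n s) * gx s)
          = ∫ t in Set.Ici (0:ℝ), (fun s => b k s * Rg s) (Stmt14Aux.Tmap n t) := by
        apply integral_congr_ae
        refine Filter.eventuallyEq_of_mem (self_mem_ae_restrict measurableSet_Ici) ?_
        intro t ht
        simp only
        rw [hRg_T t ht]
      rw [e1, e2, Stmt14Aux.integral_comp_Tmap hn (fun s => b k s * Rg s)]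
      exact (Stmt14Aux.setIntegral_Ici_eq_U _
        (fun s _ hU => by rw [hRg_van s hU, mul_zero])).symm
    obtain ⟨hGmem, hGle⟩ := hP Rg hmemR.1
    -- the goal's function, with coefficients rewritten
    have hFeq : (fun t => ∑' k, (∫ s in Set.Ici (0:ℝ), b k (Stmt14Aux.Tmap n s) * x s)
          * transl a k t)
        = fun t => ∑' k, (∫ s in Set.Ici (0:ℝ), b k s * Rg s) * transl a k t := by
      funext t
      congr 1
      funext k
      rw [hcd k]
    -- measurable versions of F and G
    set F₁ : ℝ → ℝ := fun t => ∑' k, (∫ s in Set.Ici (0:ℝ), b k s * Rg s) * transl a k t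
      with hF₁def
    set G₀ : ℝ → ℝ := fun t => ∑' k, (∫ s in Set.Ici (0:ℝ), b k s * Rg s) * transl a (n k) t
      with hG₀def
    have hF₁closed : ∀ t, F₁ t = (∫ s in Set.Ici (0:ℝ), b ⌊t⌋₊ s * Rg s)
        * transl a ⌊t⌋₊ t := fun t =>
      Stmt14Aux.tsum_transl_floor a (fun k => ∫ s in Set.Ici (0:ℝ), b k s * Rg s) t
    have hG₀closed : ∀ t, G₀ t = (∫ s in Set.Ici (0:ℝ), b (Stmt14Aux.mIdx n t) s * Rg s)
        * transl a (n (Stmt14Aux.mIdx n t)) t := fun t =>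
      Stmt14Aux.tsum_transl_sub hn a (fun k => ∫ s in Set.Ici (0:ℝ), b k s * Rg s) t
    set F' : ℝ → ℝ := fun t => (∫ s in Set.Ici (0:ℝ), b ⌊t⌋₊ s * Rg s)
        * Stmt14Aux.trG ga Nat.floor t with hF'def
    set G' : ℝ → ℝ := fun t => (∫ s in Set.Ici (0:ℝ), b (Stmt14Aux.mIdx n t) s * Rg s)
        * Stmt14Aux.trG ga (fun s => n (Stmt14Aux.mIdx n s)) t with hG'def
    have hF'M : Measurable F' :=
      (Stmt14Aux.measurable_castcomp (fun k => ∫ s in Set.Ici (0:ℝ), b k s * Rg s) _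
        Nat.measurable_floor).mul (Stmt14Aux.measurable_trG hgaM Nat.measurable_floor)
    have hG'M : Measurable G' :=
      (Stmt14Aux.measurable_castcomp (fun k => ∫ s in Set.Ici (0:ℝ), b k s * Rg s) _
        (Stmt14Aux.measurable_mIdx hn)).mul
        (Stmt14Aux.measurable_trG hgaM
          ((measurable_from_top (f := n)).comp (Stmt14Aux.measurable_mIdx hn)))
    -- F₁ ≈ F', G₀ ≈ G' off null sets
    have hFnull : volume ({t | F₁ t ≠ F' t} ∩ Set.Ici (0:ℝ)) = 0 := by
      apply measure_mono_null _
        (Stmt14Aux.transl_ae_congr a ga hanull (fun t => ⌊t⌋₊))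
      rintro t ⟨ht, ht0⟩
      refine ⟨?_, ht0⟩
      intro he
      apply ht
      rw [hF₁closed t, hF'def]
      simp only [Stmt14Aux.trG_eq]
      rw [he]
    have hGnull : volume ({t | G₀ t ≠ G' t} ∩ Set.Ici (0:ℝ)) = 0 := by
      apply measure_mono_null _
        (Stmt14Aux.transl_ae_congr a ga hanull (fun s => n (Stmt14Aux.mIdx n s)))
      rintro t ⟨ht, ht0⟩
      refine ⟨?_, ht0⟩
      intro he
      apply ht
      rw [hG₀closed t, hG'def]
      simp only [Stmt14Aux.trG_eq]
      rw [he]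
    -- F' = G' ∘ Tmap on [0, ∞)
    have hF'G' : ∀ t, 0 ≤ t → F' t = G' (Stmt14Aux.Tmap n t) := by
      intro t ht
      have h1 := Stmt14Aux.Tmap_mem (n := n) t ht
      have h2 : Stmt14Aux.mIdx n (Stmt14Aux.Tmap n t) = ⌊t⌋₊ := Stmt14Aux.mIdx_eq hn h1
      rw [hF'def, hG'def]
      simp only [Stmt14Aux.trG, h2]
      rw [if_pos ⟨Nat.floor_le ht, Nat.lt_floor_add_one t⟩, if_pos ⟨h1.1, h1.2⟩]
      congr 2
      unfold Stmt14Aux.Tmap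
      ring
    have hG'van : ∀ s, 0 ≤ s → s ∉ Stmt14Aux.U n → G' s = 0 := by
      intro s _ hs
      rw [hG'def]
      simp only [Stmt14Aux.trG]
      rw [if_neg, mul_zero]
      intro hc
      exact hs (Set.mem_iUnion.2 ⟨Stmt14Aux.mIdx n s, ⟨hc.1, hc.2⟩⟩)
    -- distributions of F₁ and G₀ agree
    have hdistFG : ∀ τ : ℝ, 0 < τ →
        (volume.restrict (Set.Ici (0:ℝ))) {t | τ < |F₁ t|}
          = (volume.restrict (Set.Ici (0:ℝ))) {t | τ < |G₀ t|} := by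
      intro τ hτ
      rw [Stmt14Aux.dist_congr F₁ F' hFnull τ,
        Stmt14Aux.dist_Tmap hn F' G' hG'M hF'G' hG'van τ hτ,
        ← Stmt14Aux.dist_congr G₀ G' hGnull τ]
    -- F₁ is AE measurable
    have hF₁aem : AEMeasurable F₁ (volume.restrict (Set.Ici (0:ℝ))) := by
      apply hF'M.aemeasurable.congr
      symm
      rw [Filter.EventuallyEq, ae_iff, Measure.restrict_apply' measurableSet_Ici]
      exact measure_mono_null (fun t ht => ht) hFnull
    have hmain : X.Mem F₁ ∧ X.N F₁ = X.N G₀ := X.symm F₁ G₀ hF₁aem hGmem hdistFG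
    constructor
    · show X.Mem (fun t => ∑' k, (∫ s in Set.Ici (0:ℝ), b k (Stmt14Aux.Tmap n s) * x s)
        * transl a k t)
      rw [hFeq]
      exact hmain.1
    · show X.N (fun t => ∑' k, (∫ s in Set.Ici (0:ℝ), b k (Stmt14Aux.Tmap n s) * x s)
        * transl a k t) ≤ C * X.N x
      rw [hFeq, hmain.2]
      calc X.N G₀ ≤ C * X.N Rg := hGle
        _ = C * X.N x := by rw [hmemR.2]
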